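/- Let C be a linear code in 𝔽_q^n and C^⊥ = {u ∈ 𝔽_q^n : u·v = 0 for all v ∈ C} its dual. Then the weight enumerators satisfy the MacWilliams identity W_C(x,y) = (1/#C^⊥) · W_{C^⊥}(x + (q−1)y, x − y). -/
import Mathlib


noncomputable section

open scoped Classical

/-- The Hamming weight: the number of nonzero coordinates. -/
def hamWt {R : Type*} [CommRing R] {n : ℕ} (c : Fin n → R) : ℕ :=
  (Finset.univ.filter fun j : Fin n => c j ≠ 0).card

/-- The dual code `C^⊥ = {u : u·v = 0 for all v ∈ C}`. -/
def dualCode {R : Type*} [CommRing R] {n : ℕ} (C : Submodule R (Fin n → R)) :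
    Submodule R (Fin n → R) where
  carrier := {u | ∀ v ∈ C, ∑ j, u j * v j = 0}
  zero_mem' := fun v _ => by simp
  add_mem' := fun {a b} ha hb v hv => by
    simp only [Pi.add_apply, add_mul, Finset.sum_add_distrib]
    rw [ha v hv, hb v hv, add_zero]
  smul_mem' := fun c a ha v hv => by
    simp only [Pi.smul_apply, smul_eq_mul, mul_assoc, ← Finset.mul_sum]
    rw [ha v hv, mul_zero]

open Finset
set_option linter.unusedSectionVars false
set_option maxHeartbeats 1000000

section helpers
variable {F : Type*} [Field F] [Fintype F] {n : ℕ}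

private lemma char_sum_eq_prod {A M : Type*} [AddCommMonoid A] [CommMonoid M]
    (χ : AddChar A M) {ι : Type*} (s : Finset ι) (f : ι → A) :
    χ (∑ j ∈ s, f j) = ∏ j ∈ s, χ (f j) := by
  induction s using Finset.cons_induction with
  | empty => simp
  | cons a s ha ih =>
      rw [Finset.sum_cons, Finset.prod_cons, AddChar.map_add_eq_mul, ih]

private lemma mem_dualCode (D : Submodule F (Fin n → F)) (v : Fin n → F) :
    v ∈ dualCode D ↔ ∀ w ∈ D, ∑ j, v j * w j = 0 := Iff.rfl

private lemma wt_prod (x y : ℂ) (v : Fin n → F) :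
    (∏ j, if v j = 0 then x else y) = x ^ (n - hamWt v) * y ^ hamWt v := by
  rw [Finset.prod_ite]
  simp only [Finset.prod_const]
  have h := Finset.card_filter_add_card_filter_not
    (s := (univ : Finset (Fin n))) (p := fun j => v j = 0)
  rw [Finset.card_univ, Fintype.card_fin] at h
  have hw : (univ.filter fun j => ¬ v j = 0).card = hamWt v := by
    unfold hamWt; congr 1
  have hz : (univ.filter fun j => v j = 0).card = n - hamWt v := by omega
  rw [hw, hz]

variable {χ : AddChar F ℂ}

private lemma coord_sum (hχ : χ.IsPrimitive) (x y : ℂ) (a : F) :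
    ∑ b : F, (if b = 0 then x else y) * χ (a * b)
      = if a = 0 then x + ((Fintype.card F : ℂ) - 1) * y else x - y := by
  have h1 : ∀ b : F, (if b = 0 then x else y) * χ (a * b)
      = (if b = 0 then (x - y) * χ (a * b) else 0) + y * χ (a * b) := by
    intro b; split_ifs <;> ring
  rw [Finset.sum_congr rfl fun b _ => h1 b, Finset.sum_add_distrib, ← Finset.mul_sum,
    Finset.sum_ite_eq' univ (0 : F) (fun b => (x - y) * χ (a * b))]
  have h2 : ∑ b : F, χ (a * b) = ∑ b : F, χ (b * a) := by
    exact Finset.sum_congr rfl fun b _ => by rw [mul_comm]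
  rw [h2, AddChar.sum_mulShift a hχ]
  simp only [Finset.mem_univ, if_true, mul_zero, AddChar.map_zero_eq_one, mul_one]
  split_ifs <;> ring

private lemma key_sum (hχ : χ.IsPrimitive) (x y : ℂ) (u : Fin n → F) :
    ∑ v : Fin n → F, (x ^ (n - hamWt v) * y ^ hamWt v) * χ (∑ j, u j * v j)
      = (x + ((Fintype.card F : ℂ) - 1) * y) ^ (n - hamWt u) * (x - y) ^ hamWt u := by
  have h1 : ∀ v : Fin n → F, (x ^ (n - hamWt v) * y ^ hamWt v) * χ (∑ j, u j * v j)
      = ∏ j, ((if v j = 0 then x else y) * χ (u j * v j)) := by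
    intro v
    rw [Finset.prod_mul_distrib, wt_prod, char_sum_eq_prod]
  rw [Finset.sum_congr rfl fun v _ => h1 v, ← Fintype.prod_sum
    (fun (j : Fin n) (b : F) => (if b = 0 then x else y) * χ (u j * b)),
    Finset.prod_congr rfl fun j _ => coord_sum hχ x y (u j), wt_prod]


private lemma dual_char_sum (hχ : χ.IsPrimitive) (D : Submodule F (Fin n → F))
    (v : Fin n → F) :
    ∑ u : D, χ (∑ j, (u : Fin n → F) j * v j)
      = if v ∈ dualCode D then (Nat.card D : ℂ) else 0 := by
  split_ifs with hv
  · have h : ∀ u : D, χ (∑ j, (u : Fin n → F) j * v j) = 1 := by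
      intro u
      have h0 := (mem_dualCode D v).mp hv u u.2
      have : (∑ j, (u : Fin n → F) j * v j) = ∑ j, v j * (u : Fin n → F) j :=
        Finset.sum_congr rfl fun j _ => mul_comm _ _
      rw [this, h0, AddChar.map_zero_eq_one]
    rw [Finset.sum_congr rfl fun u _ => h u]
    simp [Nat.card_eq_fintype_card]
  · obtain ⟨w, hwD, hw⟩ : ∃ w ∈ D, ∑ j, v j * w j ≠ 0 := by
      by_contra hcon
      push_neg at hcon
      exact hv ((mem_dualCode D v).mpr hcon)
    set a : F := ∑ j, v j * w j with ha
    obtain ⟨c, hc⟩ := AddChar.ne_one_iff.mp (hχ hw)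
    rw [AddChar.mulShift_apply] at hc
    set u₀ : D := ⟨c • w, D.smul_mem c hwD⟩ with hu₀
    have hL : χ (∑ j, (u₀ : Fin n → F) j * v j) = χ (a * c) := by
      congr 1
      simp only [hu₀, Pi.smul_apply, smul_eq_mul, ha, Finset.mul_sum]
      rw [mul_comm (∑ j, v j * w j) c, Finset.mul_sum]
      exact Finset.sum_congr rfl fun j _ => by ring
    have htr : ∑ u : D, χ (∑ j, ((u₀ + u : D) : Fin n → F) j * v j)
        = ∑ u : D, χ (∑ j, (u : Fin n → F) j * v j) :=
      Fintype.sum_bijective _ (AddGroup.addLeft_bijective u₀) _ _ fun u => rfl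
    have hsplit : ∀ u : D, χ (∑ j, ((u₀ + u : D) : Fin n → F) j * v j)
        = χ (a * c) * χ (∑ j, (u : Fin n → F) j * v j) := by
      intro u
      rw [← hL, ← AddChar.map_add_eq_mul]
      congr 1
      simp only [Submodule.coe_add, Pi.add_apply, add_mul, Finset.sum_add_distrib]
    rw [Finset.sum_congr rfl fun u _ => hsplit u, ← Finset.mul_sum] at htr
    exact eq_zero_of_mul_eq_self_left hc htr

private lemma full_char_sum (hχ : χ.IsPrimitive) (u : Fin n → F) :
    ∑ v : Fin n → F, χ (∑ j, u j * v j)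
      = if u = 0 then ((Fintype.card F : ℂ)) ^ n else 0 := by
  have h1 : ∀ v : Fin n → F, χ (∑ j, u j * v j) = ∏ j, χ (u j * v j) := fun v =>
    char_sum_eq_prod χ univ _
  rw [Finset.sum_congr rfl fun v _ => h1 v,
    ← Fintype.prod_sum (fun (j : Fin n) (b : F) => χ (u j * b))]
  have h2 : ∀ j : Fin n, ∑ b : F, χ (u j * b)
      = if u j = 0 then (Fintype.card F : ℂ) else 0 := by
    intro j
    rw [Finset.sum_congr rfl fun b _ => by rw [mul_comm]]
    rw [AddChar.sum_mulShift (u j) hχ]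
    split_ifs <;> simp
  rw [Finset.prod_congr rfl fun j _ => h2 j]
  split_ifs with h
  · simp [h]
  · obtain ⟨j, hj⟩ : ∃ j, u j ≠ 0 := by
      by_contra hcon; push_neg at hcon; exact h (funext hcon)
    exact Finset.prod_eq_zero (Finset.mem_univ j) (by simp [hj])

private lemma card_mul_card (hχ : χ.IsPrimitive) (D : Submodule F (Fin n → F)) :
    Nat.card D * Nat.card (dualCode D) = Fintype.card F ^ n := by
  have key : ((Nat.card D : ℂ)) * (Nat.card (dualCode D) : ℂ) = (Fintype.card F : ℂ) ^ n := by
    have h1 : ∑ u : D, ∑ v : Fin n → F, χ (∑ j, (u : Fin n → F) j * v j)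
        = (Fintype.card F : ℂ) ^ n := by
      simp_rw [full_char_sum hχ]
      have : ∀ u : D, ((u : Fin n → F) = 0) = (u = (0 : D)) := fun u =>
        propext (ZeroMemClass.coe_eq_zero (x := u))
      simp_rw [this]
      simp
    have h2 : ∑ u : D, ∑ v : Fin n → F, χ (∑ j, (u : Fin n → F) j * v j)
        = (Nat.card D : ℂ) * (Nat.card (dualCode D) : ℂ) := by
      rw [Finset.sum_comm]
      simp_rw [dual_char_sum hχ D]
      rw [Finset.sum_ite, Finset.sum_const, Finset.sum_const]
      simp only [smul_zero, add_zero, nsmul_eq_mul]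
      rw [mul_comm]
      congr 1
      rw [Nat.card_eq_fintype_card, Fintype.card_subtype]
    rw [← h2, h1]
  exact_mod_cast key

private lemma dual_dual (hχ : χ.IsPrimitive) (C : Submodule F (Fin n → F)) :
    dualCode (dualCode C) = C := by
  have hsub : (C : Set (Fin n → F)) ⊆ (dualCode (dualCode C) : Set (Fin n → F)) := by
    intro v hv
    refine (mem_dualCode _ v).mpr fun w hw => ?_
    have := (mem_dualCode C w).mp hw v hv
    rw [← this]
    exact Finset.sum_congr rfl fun j _ => mul_comm _ _
  have hcard : Nat.card (dualCode (dualCode C)) = Nat.card C := by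
    have h1 := card_mul_card hχ C
    have h2 := card_mul_card hχ (dualCode C)
    have hpos : 0 < Nat.card (dualCode C) := Nat.card_pos
    have h3 : Nat.card (dualCode C) * Nat.card (dualCode (dualCode C))
        = Nat.card (dualCode C) * Nat.card C := by
      rw [h2, ← h1]; ring
    exact Nat.eq_of_mul_eq_mul_left hpos h3
  symm
  apply SetLike.coe_injective
  apply Set.eq_of_subset_of_ncard_le hsub
  rw [← Nat.card_coe_set_eq, ← Nat.card_coe_set_eq]
  simp only [SetLike.coe_sort_coe]
  omega
end helpers

/-- The MacWilliams identity for a linear code `C ⊆ 𝔽_q^n`: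
`W_C(x,y) = (1/#C^⊥) · W_{C^⊥}(x + (q−1)y, x − y)`. -/
theorem stmt13 (F : Type*) [Field F] [Fintype F] (n : ℕ)
    (C : Submodule F (Fin n → F)) (x y : ℚ) :
    (∑ᶠ u : C, x ^ (n - hamWt (u : Fin n → F)) * y ^ hamWt (u : Fin n → F)) =
      (1 / (Nat.card (dualCode C) : ℚ)) *
        ∑ᶠ u : dualCode C,
          (x + ((Fintype.card F : ℚ) - 1) * y) ^ (n - hamWt (u : Fin n → F)) *
            (x - y) ^ hamWt (u : Fin n → F) := by
  have hχ : (AddChar.FiniteField.primitiveChar_to_Complex F).IsPrimitive :=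
    AddChar.FiniteField.primitiveChar_to_Complex_isPrimitive F
  set χ : AddChar F ℂ := AddChar.FiniteField.primitiveChar_to_Complex F
  rw [finsum_eq_sum_of_fintype, finsum_eq_sum_of_fintype]
  apply Rat.cast_injective (α := ℂ)
  push_cast
  set X := (x : ℂ)
  set Y := (y : ℂ)
  have hcard0 : (Nat.card (dualCode C) : ℂ) ≠ 0 := by
    exact_mod_cast Nat.card_pos (α := dualCode C).ne'
  have hS : (∑ u : dualCode C,
      (X + ((Fintype.card F : ℂ) - 1) * Y) ^ (n - hamWt (u : Fin n → F)) *
        (X - Y) ^ hamWt (u : Fin n → F))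
      = (Nat.card (dualCode C) : ℂ) *
        ∑ u : C, X ^ (n - hamWt (u : Fin n → F)) * Y ^ hamWt (u : Fin n → F) := by
    calc ∑ u : dualCode C,
        (X + ((Fintype.card F : ℂ) - 1) * Y) ^ (n - hamWt (u : Fin n → F)) *
          (X - Y) ^ hamWt (u : Fin n → F)
        = ∑ u : dualCode C, ∑ v : Fin n → F,
            (X ^ (n - hamWt v) * Y ^ hamWt v) * χ (∑ j, (u : Fin n → F) j * v j) :=
          Finset.sum_congr rfl fun u _ => (key_sum hχ X Y (u : Fin n → F)).symm
      _ = ∑ v : Fin n → F, ∑ u : dualCode C,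
            (X ^ (n - hamWt v) * Y ^ hamWt v) * χ (∑ j, (u : Fin n → F) j * v j) :=
          Finset.sum_comm
      _ = ∑ v : Fin n → F, (X ^ (n - hamWt v) * Y ^ hamWt v) *
            ∑ u : dualCode C, χ (∑ j, (u : Fin n → F) j * v j) := by
          simp_rw [Finset.mul_sum]
      _ = ∑ v : Fin n → F, (X ^ (n - hamWt v) * Y ^ hamWt v) *
            (if v ∈ C then (Nat.card (dualCode C) : ℂ) else 0) := by
          simp_rw [dual_char_sum hχ (dualCode C), dual_dual hχ C]
      _ = ∑ v ∈ univ.filter (· ∈ C),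
            (X ^ (n - hamWt v) * Y ^ hamWt v) * (Nat.card (dualCode C) : ℂ) := by
          rw [Finset.sum_filter]
          exact Finset.sum_congr rfl fun v _ => by split_ifs <;> simp
      _ = (∑ v ∈ univ.filter (· ∈ C), X ^ (n - hamWt v) * Y ^ hamWt v) *
            (Nat.card (dualCode C) : ℂ) := by rw [Finset.sum_mul]
      _ = (∑ u : C, X ^ (n - hamWt (u : Fin n → F)) * Y ^ hamWt (u : Fin n → F)) *
            (Nat.card (dualCode C) : ℂ) := by
          rw [Finset.sum_subtype (p := (· ∈ C)) (s := univ.filter (· ∈ C)) (by simp)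
            (fun v => X ^ (n - hamWt v) * Y ^ hamWt v)]
      _ = (Nat.card (dualCode C) : ℂ) *
            ∑ u : C, X ^ (n - hamWt (u : Fin n → F)) * Y ^ hamWt (u : Fin n → F) := by
          rw [mul_comm]
  rw [hS, ← mul_assoc, one_div, inv_mul_cancel₀ hcard0, one_mul]
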